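/- Let C be a metric cycle of total length L (i.e., the circle ℝ/Lℤ with its intrinsic metric d_C), let β ∈ [0, 1/2], and let a, b ∈ C satisfy β·L ≤ d_C(a,b) ≤ (1/2 − β)·L. Then for any x, y ∈ C with d_C(x,a) ≤ β·L and d_C(y,a) ≤ β·L, we have |d_C(x,b) − d_C(y,b)| = d_C(x,y). -/

import Mathlib

/-- The intrinsic metric on the cycle `ℝ/Lℤ` of total length `L`, in terms of
representatives in `ℝ`: `d_C(x,y) = min(m, L − m)` where `m = (x−y) mod L`. -/
noncomputable def cycDist (L x y : ℝ) : ℝ :=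
  min ((x - y) - L * (⌊(x - y) / L⌋ : ℤ)) (L - ((x - y) - L * (⌊(x - y) / L⌋ : ℤ)))

/-- The representative of `t` modulo `L` in `[0, L)`. -/
noncomputable def cycG (L t : ℝ) : ℝ := t - L * (⌊t / L⌋ : ℤ)

lemma cycDist_def (L x y : ℝ) :
    cycDist L x y = min (cycG L (x - y)) (L - cycG L (x - y)) := rfl

lemma cycG_nonneg (L : ℝ) (hL : 0 < L) (t : ℝ) : 0 ≤ cycG L t := by
  have h := Int.floor_le (t / L)
  have h2 : L * (⌊t / L⌋ : ℤ) ≤ t := by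
    have := mul_le_mul_of_nonneg_left h hL.le
    rw [mul_div_cancel₀ _ (ne_of_gt hL)] at this
    exact this
  simpa [cycG] using sub_nonneg.mpr h2

lemma cycG_lt (L : ℝ) (hL : 0 < L) (t : ℝ) : cycG L t < L := by
  have h := Int.lt_floor_add_one (t / L)
  have h2 : t < L * ((⌊t / L⌋ : ℤ) + 1) := by
    have := mul_lt_mul_of_pos_left h hL
    rw [mul_div_cancel₀ _ (ne_of_gt hL)] at this
    exact this
  unfold cycG
  nlinarith

lemma cycG_spec (L t : ℝ) : t = cycG L t + (⌊t / L⌋ : ℤ) * L := by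
  unfold cycG; ring

lemma cycG_eq (L : ℝ) (hL : 0 < L) (t r : ℝ) (k : ℤ) (h : t = r + (k : ℝ) * L)
    (h0 : 0 ≤ r) (h1 : r < L) : cycG L t = r := by
  have hfl : ⌊t / L⌋ = k := by
    have ht : t / L = r / L + (k : ℝ) := by
      field_simp [h]; rw [h]; ring
    rw [ht, Int.floor_add_intCast, Int.floor_eq_zero_iff.mpr, zero_add]
    constructor
    · positivity
    · rw [div_lt_one hL]; exact h1
  unfold cycG
  rw [hfl, h]; ring

lemma cycG_neg (L : ℝ) (hL : 0 < L) (t : ℝ) (ht : 0 < cycG L t) :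
    cycG L (-t) = L - cycG L t := by
  apply cycG_eq L hL _ _ (-⌊t / L⌋ - 1)
  · have := cycG_spec L t
    push_cast
    linarith
  · linarith [cycG_lt L hL t]
  · linarith

lemma cycDist_comm (L : ℝ) (hL : 0 < L) (x y : ℝ) : cycDist L x y = cycDist L y x := by
  rcases eq_or_lt_of_le (cycG_nonneg L hL (x - y)) with h | h
  · have h2 : cycG L (y - x) = 0 := by
      apply cycG_eq L hL _ _ (-⌊(x - y) / L⌋) _ le_rfl hL
      have := cycG_spec L (x - y)
      push_cast
      linarith
    rw [cycDist_def, cycDist_def, ← h, h2]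
  · have h2 : cycG L (y - x) = L - cycG L (x - y) := by
      have : y - x = -(x - y) := by ring
      rw [this, cycG_neg L hL _ h]
    rw [cycDist_def, cycDist_def, h2]
    rw [min_comm]
    congr 1
    ring

lemma cycDist_congr (L x y x' y' : ℝ) (h : x - y = x' - y') :
    cycDist L x y = cycDist L x' y' := by
  unfold cycDist; rw [h]

/-- Points within `β·L` of `w` (where `β·L ≤ cycG L w ≤ (1/2−β)·L`) have
representative within `β·L` of that of `w`. -/
lemma cycG_near (L : ℝ) (hL : 0 < L) (β : ℝ) (hβ0 : 0 ≤ β) (w u : ℝ)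
    (hW1 : β * L ≤ cycG L w) (hW2 : cycG L w ≤ (1 / 2 - β) * L)
    (hu : cycDist L u w ≤ β * L) :
    cycG L w - β * L ≤ cycG L u ∧ cycG L u ≤ cycG L w + β * L := by
  have hm0 : 0 ≤ cycG L (u - w) := cycG_nonneg L hL _
  have hm1 : cycG L (u - w) < L := cycG_lt L hL _
  have hspec := cycG_spec L (u - w)
  have hwspec := cycG_spec L w
  rw [cycDist_def] at hu
  rcases min_le_iff.mp hu with h | h
  · have heq : cycG L u = cycG L w + cycG L (u - w) := by
      apply cycG_eq L hL _ _ (⌊w / L⌋ + ⌊(u - w) / L⌋)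
      · push_cast; linarith
      · linarith [cycG_nonneg L hL w]
      · linarith
    constructor <;> linarith
  · have heq : cycG L u = cycG L w + cycG L (u - w) - L := by
      apply cycG_eq L hL _ _ (⌊w / L⌋ + ⌊(u - w) / L⌋ + 1)
      · push_cast; linarith
      · linarith
      · linarith
    constructor <;> linarith

lemma cycKey (L : ℝ) (hL : 0 < L) (β : ℝ) (hβ0 : 0 ≤ β)
    (w u v : ℝ) (hw : cycG L w ≤ L / 2)
    (hab1 : β * L ≤ cycDist L w 0) (hab2 : cycDist L w 0 ≤ (1 / 2 - β) * L)
    (hx : cycDist L u w ≤ β * L) (hy : cycDist L v w ≤ β * L) :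
    |cycDist L u 0 - cycDist L v 0| = cycDist L u v := by
  have hw0 : cycDist L w 0 = cycG L w := by
    rw [cycDist_def, sub_zero]
    exact min_eq_left (by linarith)
  rw [hw0] at hab1 hab2
  obtain ⟨hu1, hu2⟩ := cycG_near L hL β hβ0 w u hab1 hab2 hx
  obtain ⟨hv1, hv2⟩ := cycG_near L hL β hβ0 w v hab1 hab2 hy
  have hGu2 : cycG L u ≤ L / 2 := by linarith
  have hGv2 : cycG L v ≤ L / 2 := by linarith
  have hGu0 : 0 ≤ cycG L u := cycG_nonneg L hL u
  have hGv0 : 0 ≤ cycG L v := cycG_nonneg L hL v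
  have hDu : cycDist L u 0 = cycG L u := by
    rw [cycDist_def, sub_zero]
    exact min_eq_left (by linarith)
  have hDv : cycDist L v 0 = cycG L v := by
    rw [cycDist_def, sub_zero]
    exact min_eq_left (by linarith)
  have husp := cycG_spec L u
  have hvsp := cycG_spec L v
  have huv : cycDist L u v = |cycG L u - cycG L v| := by
    rcases le_or_gt (cycG L v) (cycG L u) with h | h
    · have heq : cycG L (u - v) = cycG L u - cycG L v := by
        apply cycG_eq L hL _ _ (⌊u / L⌋ - ⌊v / L⌋)
        · push_cast; linarith
        · linarith
        · linarith
      rw [cycDist_def, heq, abs_of_nonneg (by linarith)]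
      exact min_eq_left (by linarith)
    · have heq : cycG L (u - v) = cycG L u - cycG L v + L := by
        apply cycG_eq L hL _ _ (⌊u / L⌋ - ⌊v / L⌋ - 1)
        · push_cast; linarith
        · linarith
        · linarith
      rw [cycDist_def, heq, abs_of_nonpos (by linarith)]
      rw [min_eq_right (by linarith)]
      ring
  rw [hDu, hDv, huv]

/-- Flattening a cycle at a point `b` is an isometry on the ball of radius `β·L`
around a point `a` with `β·L ≤ d_C(a,b) ≤ (1/2 − β)·L`. -/
theorem flatten_isometric_near (L : ℝ) (hL : 0 < L) (β : ℝ)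
    (hβ0 : 0 ≤ β) (hβ2 : β ≤ 1 / 2) (a b x y : ℝ)
    (hab1 : β * L ≤ cycDist L a b) (hab2 : cycDist L a b ≤ (1 / 2 - β) * L)
    (hx : cycDist L x a ≤ β * L) (hy : cycDist L y a ≤ β * L) :
    |cycDist L x b - cycDist L y b| = cycDist L x y := by
  rcases le_or_gt (cycG L (a - b)) (L / 2) with hcase | hcase
  · -- direct case: w = a − b, u = x − b, v = y − b
    have h1 : cycDist L (a - b) 0 = cycDist L a b := cycDist_congr _ _ _ _ _ (by ring)
    have h2 : cycDist L (x - b) (a - b) = cycDist L x a := cycDist_congr _ _ _ _ _ (by ring)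
    have h3 : cycDist L (y - b) (a - b) = cycDist L y a := cycDist_congr _ _ _ _ _ (by ring)
    have h4 : cycDist L (x - b) 0 = cycDist L x b := cycDist_congr _ _ _ _ _ (by ring)
    have h5 : cycDist L (y - b) 0 = cycDist L y b := cycDist_congr _ _ _ _ _ (by ring)
    have h6 : cycDist L (x - b) (y - b) = cycDist L x y := cycDist_congr _ _ _ _ _ (by ring)
    have := cycKey L hL β hβ0 (a - b) (x - b) (y - b) hcase
      (by rw [h1]; exact hab1) (by rw [h1]; exact hab2)
      (by rw [h2]; exact hx) (by rw [h3]; exact hy)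
    rwa [h4, h5, h6] at this
  · -- reflected case: w = b − a, u = b − x, v = b − y
    have hne : 0 < cycG L (a - b) := lt_of_le_of_lt (by positivity) hcase
    have hwref : cycG L (b - a) ≤ L / 2 := by
      have : b - a = -(a - b) := by ring
      rw [this, cycG_neg L hL _ hne]
      linarith
    have h1 : cycDist L (b - a) 0 = cycDist L a b := by
      rw [cycDist_congr L _ _ b a (by ring)]
      exact cycDist_comm L hL b a
    have h2 : cycDist L (b - x) (b - a) = cycDist L x a := by
      rw [cycDist_congr L _ _ a x (by ring)]
      exact cycDist_comm L hL a x
    have h3 : cycDist L (b - y) (b - a) = cycDist L y a := by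
      rw [cycDist_congr L _ _ a y (by ring)]
      exact cycDist_comm L hL a y
    have h4 : cycDist L (b - x) 0 = cycDist L x b := by
      rw [cycDist_congr L _ _ b x (by ring)]
      exact cycDist_comm L hL b x
    have h5 : cycDist L (b - y) 0 = cycDist L y b := by
      rw [cycDist_congr L _ _ b y (by ring)]
      exact cycDist_comm L hL b y
    have h6 : cycDist L (b - x) (b - y) = cycDist L x y := by
      rw [cycDist_congr L _ _ y x (by ring)]
      exact cycDist_comm L hL y x
    have := cycKey L hL β hβ0 (b - a) (b - x) (b - y) hwref
      (by rw [h1]; exact hab1) (by rw [h1]; exact hab2)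
      (by rw [h2]; exact hx) (by rw [h3]; exact hy)
    rwa [h4, h5, h6] at this
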